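/- Let T = [T_1,…,T_r] be a regular set in k[x_1,…,x_n] with p_r = cls(T_r) < n, and let P = P_d·x_m^d + ⋯ + P_1·x_m + P_0 be a polynomial with m > p_r and d = deg(P,x_m) > 0, where the P_j are the coefficients of P with respect to x_m. Then prem(P, T) = 0 if and only if prem(P_j, T) = 0 for all 0 ≤ j ≤ d. -/

import Mathlib

open MvPolynomial

namespace CharSets

variable {n : ℕ} {K : Type*} [Field K]

/-- The coefficient of `x_i ^ d` in `F`, as a polynomial in the remaining variables. -/
noncomputable def coefv (i : Fin n) (d : ℕ) (F : MvPolynomial (Fin n) K) :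
    MvPolynomial (Fin n) K :=
  ∑ m ∈ F.support.filter (fun m => m i = d), monomial (Finsupp.erase i m) (F.coeff m)

/-- The leading coefficient of `F` with respect to the variable `x_i`. -/
noncomputable def lcv (i : Fin n) (F : MvPolynomial (Fin n) K) : MvPolynomial (Fin n) K :=
  coefv i (F.degreeOf i) F

/-- Auxiliary pseudo-division: computes (pseudo-quotient, pseudo-remainder) pairs,
with the first argument as fuel; the total power of the leading coefficient used is
exactly the fuel, so that starting with fuel `max(l - m + 1, 0)` yields the pair
`(Q, R)` of the unique representation `lc(F,x_i)^q • G = Q*F + R` with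
`q = max(l - m + 1, 0)` and `deg(R, x_i) < deg(F, x_i)`. -/
noncomputable def pdivAux (i : Fin n) (F : MvPolynomial (Fin n) K) :
    ℕ → MvPolynomial (Fin n) K × MvPolynomial (Fin n) K →
      MvPolynomial (Fin n) K × MvPolynomial (Fin n) K
  | 0, QR => QR
  | q + 1, QR =>
    if (QR.2).degreeOf i < F.degreeOf i then
      (lcv i F ^ (q + 1) * QR.1, lcv i F ^ (q + 1) * QR.2)
    else
      pdivAux i F q
        (lcv i F * QR.1 +
            coefv i ((QR.2).degreeOf i) QR.2 * X i ^ ((QR.2).degreeOf i - F.degreeOf i),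
          lcv i F * QR.2 -
            coefv i ((QR.2).degreeOf i) QR.2 * X i ^ ((QR.2).degreeOf i - F.degreeOf i) * F)

/-- The pseudo-remainder `prem(G, F, x_i)`. -/
noncomputable def prem (G F : MvPolynomial (Fin n) K) (i : Fin n) : MvPolynomial (Fin n) K :=
  (pdivAux i F (G.degreeOf i + 1 - F.degreeOf i) (0, G)).2

/-- The pseudo-quotient `pquo(G, F, x_i)`. -/
noncomputable def pquo (G F : MvPolynomial (Fin n) K) (i : Fin n) : MvPolynomial (Fin n) K :=
  (pdivAux i F (G.degreeOf i + 1 - F.degreeOf i) (0, G)).1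

/-- The class of `P`: the largest index (1-based) of a variable actually occurring in `P`;
the class of a constant is `0`. -/
noncomputable def cls (P : MvPolynomial (Fin n) K) : ℕ :=
  P.vars.sup fun i => (i : ℕ) + 1

/-- The degree of `G` in the leading variable of `P` (`0` if `P` is constant). -/
noncomputable def degLv (G P : MvPolynomial (Fin n) K) : ℕ :=
  if h : P.vars.Nonempty then G.degreeOf (P.vars.max' h) else 0

/-- `G` is R-reduced with respect to `P`, i.e. `deg(G, lv(P)) < deg(P, lv(P))`. -/
def RReduced (G P : MvPolynomial (Fin n) K) : Prop :=
  degLv G P < degLv P P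

/-- The initial of `P`: its leading coefficient w.r.t. its leading variable. -/
noncomputable def ini (P : MvPolynomial (Fin n) K) : MvPolynomial (Fin n) K :=
  if h : P.vars.Nonempty then lcv (P.vars.max' h) P else P

/-- Pseudo-remainder of `G` w.r.t. `F` in the leading variable of `F`
(in case `F` is constant, `m = 0` and the pseudo-remainder is `0`). -/
noncomputable def premLv (G F : MvPolynomial (Fin n) K) : MvPolynomial (Fin n) K :=
  if h : F.vars.Nonempty then prem G F (F.vars.max' h) else 0

/-- Pseudo-quotient of `G` w.r.t. `F` in the leading variable of `F`. -/
noncomputable def pquoLv (G F : MvPolynomial (Fin n) K) : MvPolynomial (Fin n) K :=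
  if h : F.vars.Nonempty then pquo G F (F.vars.max' h) else 0

/-- Iterated pseudo-remainder with respect to a triangular set `[T_1, …, T_r]`:
`prem(P, T) = prem(⋯prem(P, T_r, lv(T_r)), …, T_1, lv(T_1))`. -/
noncomputable def premTS (P : MvPolynomial (Fin n) K) (L : List (MvPolynomial (Fin n) K)) :
    MvPolynomial (Fin n) K :=
  L.foldr (fun T acc => premLv acc T) P

/-- The Sylvester matrix of `F` and `G` with respect to the variable `x_i`. -/
noncomputable def sylvester (i : Fin n) (F G : MvPolynomial (Fin n) K) :
    Matrix (Fin (G.degreeOf i + F.degreeOf i)) (Fin (G.degreeOf i + F.degreeOf i))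
      (MvPolynomial (Fin n) K) :=
  Matrix.of fun r c =>
    if (r : ℕ) < G.degreeOf i then
      if (r : ℕ) ≤ (c : ℕ) ∧ (c : ℕ) ≤ (r : ℕ) + F.degreeOf i then
        coefv i (F.degreeOf i + (r : ℕ) - (c : ℕ)) F
      else 0
    else
      if (r : ℕ) - G.degreeOf i ≤ (c : ℕ) ∧ (c : ℕ) ≤ (r : ℕ) then
        coefv i (G.degreeOf i + ((r : ℕ) - G.degreeOf i) - (c : ℕ)) G
      else 0

/-- The resultant `res(F, G, x_i)` of `F` and `G` w.r.t. `x_i`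
(the determinant of the Sylvester matrix). -/
noncomputable def resv (F G : MvPolynomial (Fin n) K) (i : Fin n) : MvPolynomial (Fin n) K :=
  (sylvester i F G).det

/-- Resultant of `F` and `G` w.r.t. the leading variable of `G`. -/
noncomputable def resLv (F G : MvPolynomial (Fin n) K) : MvPolynomial (Fin n) K :=
  if h : G.vars.Nonempty then resv F G (G.vars.max' h) else F

/-- Iterated resultant with respect to a triangular set:
`res(F, T) = res(⋯res(F, T_r, lv(T_r)), …, T_1, lv(T_1))`. -/
noncomputable def resTS (F : MvPolynomial (Fin n) K) (L : List (MvPolynomial (Fin n) K)) :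
    MvPolynomial (Fin n) K :=
  L.foldr (fun T acc => resLv acc T) F

/-- A triangular set: a nonempty ordered set of nonconstant polynomials with
strictly increasing classes. -/
def TriangularSet (L : List (MvPolynomial (Fin n) K)) : Prop :=
  L ≠ [] ∧ (∀ T ∈ L, 0 < cls T) ∧ L.Chain' fun A B => cls A < cls B

/-- An ascending set: either a single nonzero constant, or a triangular set in which
every later element is R-reduced with respect to every earlier one. -/
def AscendingSet (L : List (MvPolynomial (Fin n) K)) : Prop :=
  (∃ a : K, a ≠ 0 ∧ L = [MvPolynomial.C a]) ∨
    (TriangularSet L ∧ L.Pairwise fun A B => RReduced B A)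

/-- `F` has lower rank than `G`. -/
def rkLT (F G : MvPolynomial (Fin n) K) : Prop :=
  cls F < cls G ∨ (cls F = cls G ∧ 0 < cls F ∧ degLv F F < degLv G G)

/-- `F` and `G` have the same rank: neither has lower rank than the other. -/
def rkEQ (F G : MvPolynomial (Fin n) K) : Prop :=
  ¬ rkLT F G ∧ ¬ rkLT G F

/-- `B` has lower rank than `A` (as ascending sets). -/
def ascLT (B A : List (MvPolynomial (Fin n) K)) : Prop :=
  (∃ j, j < min A.length B.length ∧
      (∀ i, i < j → rkEQ (A.getD i 0) (B.getD i 0)) ∧ rkLT (B.getD j 0) (A.getD j 0)) ∨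
    (A.length < B.length ∧ ∀ i, i < A.length → rkEQ (A.getD i 0) (B.getD i 0))

/-- A Ritt characteristic set of the ideal `I`: an ascending set contained in `I`
of minimal rank among all ascending sets contained in `I`. -/
def RittCharSet (I : Ideal (MvPolynomial (Fin n) K)) (A : List (MvPolynomial (Fin n) K)) :
    Prop :=
  AscendingSet A ∧ (∀ a ∈ A, a ∈ I) ∧
    ∀ B : List (MvPolynomial (Fin n) K), AscendingSet B → (∀ b ∈ B, b ∈ I) → ¬ ascLT B A

/-- The saturated ideal of a triangular set, as a set of polynomials. -/
def satTS (L : List (MvPolynomial (Fin n) K)) : Set (MvPolynomial (Fin n) K) :=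
  {F | ∃ q : ℕ, 0 < q ∧ (L.map ini).prod ^ q * F ∈ Ideal.span {T | T ∈ L}}

/-- A regular set: a triangular set such that `res(ini(T_j), [T_1, …, T_{j-1}]) ≠ 0`
for `j = 2, …, r`. -/
def RegularSet (L : List (MvPolynomial (Fin n) K)) : Prop :=
  TriangularSet L ∧
    ∀ j : ℕ, 0 < j → j < L.length → resTS (ini (L.getD j 0)) (L.take j) ≠ 0

/-- A normal triangular set: `deg(ini(T_j), lv(T_i)) = 0` for all `i < j`. -/
def NormalSet (L : List (MvPolynomial (Fin n) K)) : Prop :=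
  TriangularSet L ∧ L.Pairwise fun A B => degLv (ini B) A = 0

/-- The purely lexicographical order on monomials determined by `x_1 < ⋯ < x_n`. -/
def plexLT (a b : Fin n →₀ ℕ) : Prop :=
  ∃ k : Fin n, a k < b k ∧ ∀ j : Fin n, k < j → a j = b j

/-- `m` is the leading monomial of `P` w.r.t. the plex order. -/
def IsLpp (P : MvPolynomial (Fin n) K) (m : Fin n →₀ ℕ) : Prop :=
  m ∈ P.support ∧ ∀ m' ∈ P.support, m' ≠ m → plexLT m' m

/-- `G` is the reduced (Buchberger–)Gröbner basis of the ideal `I` w.r.t. the plex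
term order determined by `x_1 < ⋯ < x_n`: its elements are nonzero monic members of `I`,
the leading monomial of every nonzero member of `I` is divisible by the leading monomial
of some element of `G`, every element of `G` is B-reduced w.r.t. the others, and `G`
generates `I`. -/
def IsReducedGB (I : Ideal (MvPolynomial (Fin n) K)) (G : Finset (MvPolynomial (Fin n) K)) :
    Prop :=
  (∀ g ∈ G, g ∈ I ∧ g ≠ 0 ∧ ∀ m, IsLpp g m → g.coeff m = 1) ∧
    (∀ F ∈ I, F ≠ 0 → ∃ g ∈ G, ∃ mg mF, IsLpp g mg ∧ IsLpp F mF ∧ mg ≤ mF) ∧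
    (∀ g ∈ G, ∀ g' ∈ G, g' ≠ g → ∀ m ∈ g.support, ∀ m', IsLpp g' m' → ¬ m' ≤ m) ∧
    Ideal.span (G : Set (MvPolynomial (Fin n) K)) = I

/-- `Cs` is the W-characteristic set of `I`: the minimal triangular set contained in the
reduced plex Gröbner basis `G` of `I`, i.e. for each class realized in `G`, `Cs` contains
the element of that class whose leading monomial is minimal w.r.t. the plex order, the
elements being ordered by increasing class (equivalently, by the plex order). -/
def IsWCharSet (I : Ideal (MvPolynomial (Fin n) K)) (Cs : List (MvPolynomial (Fin n) K)) :
    Prop :=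
  ∃ G : Finset (MvPolynomial (Fin n) K), IsReducedGB I G ∧
    (Cs.Chain' fun A B => cls A < cls B) ∧
    (∀ c ∈ Cs, c ∈ G) ∧
    (∀ g ∈ G, ∃ c ∈ Cs, cls c = cls g) ∧
    ∀ c ∈ Cs, ∀ g ∈ G, cls g = cls c → g ≠ c →
      ∃ mc mg, IsLpp c mc ∧ IsLpp g mg ∧ plexLT mc mg

/-- The set of common zeros of a set `S` of polynomials over `k`, taken in `Kc ^ n`
for an extension `Kc` of `k`. -/
def zeroSet {k : Type*} [Field k] (Kc : Type*) [CommRing Kc] [Algebra k Kc]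
    (S : Set (MvPolynomial (Fin n) k)) : Set (Fin n → Kc) :=
  {a | ∀ p ∈ S, MvPolynomial.aeval a p = 0}


section Aux

variable {n : ℕ} {K : Type*} [Field K]

lemma erase_add_single' {i : Fin n} {ν : Fin n →₀ ℕ} {d : ℕ} (h : ν i = d) :
    ν.erase i + Finsupp.single i d = ν := by
  ext j
  by_cases hj : j = i
  · subst hj; simp [Finsupp.erase_same, h]
  · simp [Finsupp.erase_ne hj, Finsupp.single_apply, Ne.symm hj]

lemma erase_of_add_single {i : Fin n} {ν : Fin n →₀ ℕ} {d : ℕ} (h : ν i = 0) :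
    (ν + Finsupp.single i d).erase i = ν := by
  ext j
  by_cases hj : j = i
  · subst hj; simp [Finsupp.erase_same, h]
  · simp [Finsupp.erase_ne hj, Finsupp.single_apply, Ne.symm hj]

lemma coeff_coefv (i : Fin n) (d : ℕ) (F : MvPolynomial (Fin n) K) (ν : Fin n →₀ ℕ) :
    coeff ν (coefv i d F) = if ν i = 0 then F.coeff (ν + Finsupp.single i d) else 0 := by
  classical
  rw [coefv, coeff_sum]
  simp only [coeff_monomial]
  by_cases h0 : ν i = 0
  · rw [if_pos h0]
    rw [Finset.sum_eq_single (ν + Finsupp.single i d)]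
    · rw [if_pos (erase_of_add_single h0)]
    · intro μ hμ hne
      rw [if_neg]
      intro hcon
      apply hne
      rw [Finset.mem_filter] at hμ
      rw [← erase_add_single' hμ.2, hcon]
    · intro hnot
      rw [if_pos (erase_of_add_single h0)]
      by_contra hc
      apply hnot
      rw [Finset.mem_filter]
      refine ⟨MvPolynomial.mem_support_iff.2 hc, ?_⟩
      simp [h0]
  · rw [if_neg h0]
    apply Finset.sum_eq_zero
    intro μ hμ
    rw [if_neg]
    intro hcon
    apply h0
    rw [← hcon, Finsupp.erase_same]

lemma coefv_add (i : Fin n) (d : ℕ) (F G : MvPolynomial (Fin n) K) :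
    coefv i d (F + G) = coefv i d F + coefv i d G := by
  apply MvPolynomial.ext; intro ν
  simp only [coeff_coefv, coeff_add]
  split <;> simp

lemma coefv_sub (i : Fin n) (d : ℕ) (F G : MvPolynomial (Fin n) K) :
    coefv i d (F - G) = coefv i d F - coefv i d G := by
  apply MvPolynomial.ext; intro ν
  simp only [coeff_coefv, coeff_sub]
  split <;> simp

@[simp] lemma coefv_zero (i : Fin n) (d : ℕ) : coefv i d (0 : MvPolynomial (Fin n) K) = 0 := by
  apply MvPolynomial.ext; intro ν
  simp [coeff_coefv]

lemma mem_support_coefv {i : Fin n} {d : ℕ} {F : MvPolynomial (Fin n) K} {ν : Fin n →₀ ℕ}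
    (h : ν ∈ (coefv i d F).support) :
    ν i = 0 ∧ ν + Finsupp.single i d ∈ F.support := by
  rw [MvPolynomial.mem_support_iff, coeff_coefv] at h
  by_cases h0 : ν i = 0
  · rw [if_pos h0] at h
    exact ⟨h0, MvPolynomial.mem_support_iff.2 h⟩
  · rw [if_neg h0] at h; exact absurd rfl h

lemma coefv_eq_zero_of_lt {i : Fin n} {d : ℕ} {F : MvPolynomial (Fin n) K}
    (h : F.degreeOf i < d) : coefv i d F = 0 := by
  by_contra hc
  obtain ⟨ν, hν⟩ := MvPolynomial.ne_zero_iff.1 hc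
  obtain ⟨h0, hmem⟩ := mem_support_coefv (MvPolynomial.mem_support_iff.2 hν)
  have := MvPolynomial.monomial_le_degreeOf i hmem
  simp [h0] at this
  omega

lemma degreeOf_coefv_self (i : Fin n) (d : ℕ) (F : MvPolynomial (Fin n) K) :
    (coefv i d F).degreeOf i = 0 := by
  refine Nat.le_zero.1 (MvPolynomial.degreeOf_le_iff.2 fun ν hν => ?_)
  exact (mem_support_coefv hν).1.le

lemma degreeOf_coefv_le (i j : Fin n) (d : ℕ) (F : MvPolynomial (Fin n) K) :
    (coefv i d F).degreeOf j ≤ F.degreeOf j := by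
  refine MvPolynomial.degreeOf_le_iff.2 fun ν hν => ?_
  obtain ⟨h0, hmem⟩ := mem_support_coefv hν
  calc ν j ≤ (ν + Finsupp.single i d) j := by simp
  _ ≤ F.degreeOf j := MvPolynomial.monomial_le_degreeOf j hmem

lemma lcv_ne_zero {i : Fin n} {F : MvPolynomial (Fin n) K} (h : F ≠ 0) : lcv i F ≠ 0 := by
  classical
  have hsupp : F.support.Nonempty := MvPolynomial.support_nonempty.2 h
  obtain ⟨ν, hν, hmax⟩ := Finset.exists_mem_eq_sup F.support hsupp (fun m => m i)
  have hdeg : F.degreeOf i = ν i := by rw [MvPolynomial.degreeOf_eq_sup]; exact hmax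
  intro hc
  have : coeff (ν.erase i) (lcv i F) = 0 := by rw [hc]; simp
  rw [lcv, coeff_coefv, if_pos (Finsupp.erase_same ..), hdeg,
    erase_add_single' rfl] at this
  exact MvPolynomial.mem_support_iff.1 hν this

lemma degreeOf_le_pred {i : Fin n} {D : ℕ} {A : MvPolynomial (Fin n) K}
    (hle : A.degreeOf i ≤ D) (h0 : coefv i D A = 0) : A.degreeOf i ≤ D - 1 := by
  refine MvPolynomial.degreeOf_le_iff.2 fun ν hν => ?_
  have h1 : ν i ≤ D := MvPolynomial.degreeOf_le_iff.1 hle ν hν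
  rcases Nat.lt_or_ge (ν i) D with h | h
  · omega
  · exfalso
    have hD : ν i = D := le_antisymm h1 h
    have : coeff (ν.erase i) (coefv i D A) = A.coeff ν := by
      rw [coeff_coefv, if_pos (Finsupp.erase_same ..), erase_add_single' hD]
    rw [h0] at this
    simp only [coeff_zero] at this
    exact MvPolynomial.mem_support_iff.1 hν this.symm

lemma coefv_zero_eq_self {i : Fin n} {a : MvPolynomial (Fin n) K}
    (h : a.degreeOf i = 0) : coefv i 0 a = a := by
  apply MvPolynomial.ext; intro ν
  rw [coeff_coefv]
  by_cases h0 : ν i = 0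
  · rw [if_pos h0]; simp
  · rw [if_neg h0]
    symm
    rw [← MvPolynomial.notMem_support_iff]
    intro hmem
    exact h0 (Nat.le_zero.1 (h ▸ MvPolynomial.monomial_le_degreeOf i hmem))

end Aux
section Aux2

variable {n : ℕ} {K : Type*} [Field K]

lemma coefv_monomial (i : Fin n) (d : ℕ) (μ : Fin n →₀ ℕ) (c : K) :
    coefv i d (monomial μ c) = if μ i = d then monomial (μ.erase i) c else 0 := by
  classical
  apply MvPolynomial.ext; intro ν
  rw [coeff_coefv]
  by_cases hd : μ i = d
  · rw [if_pos hd]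
    simp only [MvPolynomial.coeff_monomial]
    by_cases h0 : ν i = 0
    · rw [if_pos h0]
      by_cases he : μ.erase i = ν
      · rw [if_pos he, if_pos (by rw [← he, erase_add_single' hd])]
      · rw [if_neg he, if_neg (fun hc => he (by rw [hc, erase_of_add_single h0]))]
    · rw [if_neg h0,
        if_neg (fun (hc : μ.erase i = ν) => h0 (by rw [← hc, Finsupp.erase_same]))]
  · rw [if_neg hd, coeff_zero]
    by_cases h0 : ν i = 0
    · rw [if_pos h0, MvPolynomial.coeff_monomial,
        if_neg (fun (hc : μ = ν + Finsupp.single i d) => hd (by rw [hc]; simp [h0]))]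
    · rw [if_neg h0]

lemma coefv_sum {ι : Type*} (i : Fin n) (d : ℕ) (s : Finset ι)
    (f : ι → MvPolynomial (Fin n) K) :
    coefv i d (∑ x ∈ s, f x) = ∑ x ∈ s, coefv i d (f x) := by
  apply MvPolynomial.ext; intro ν
  simp only [coeff_coefv, coeff_sum]
  by_cases h0 : ν i = 0 <;> simp [h0]

lemma coefv_eq_sum_ite (i : Fin n) (d : ℕ) (F : MvPolynomial (Fin n) K) :
    coefv i d F = ∑ x ∈ F.support, if x i = d then monomial (x.erase i) (F.coeff x) else 0 := by
  rw [coefv]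
  exact Finset.sum_filter _ _

lemma coefv_mul (i : Fin n) (t : ℕ) (a b : MvPolynomial (Fin n) K) :
    coefv i t (a * b) = ∑ e ∈ Finset.range (t + 1), coefv i e a * coefv i (t - e) b := by
  classical
  conv_lhs => rw [a.as_sum, b.as_sum, Finset.sum_mul_sum]
  simp only [monomial_mul]
  rw [coefv_sum]
  simp only [coefv_sum, coefv_monomial]
  simp only [coefv_eq_sum_ite, Finset.sum_mul_sum]
  have hsw : ∀ (f : ℕ → (Fin n →₀ ℕ) → (Fin n →₀ ℕ) → MvPolynomial (Fin n) K),
      (∑ e ∈ Finset.range (t + 1), ∑ x ∈ a.support, ∑ y ∈ b.support, f e x y)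
        = ∑ x ∈ a.support, ∑ y ∈ b.support, ∑ e ∈ Finset.range (t + 1), f e x y := by
    intro f
    rw [Finset.sum_comm]
    exact Finset.sum_congr rfl fun x _ => Finset.sum_comm
  rw [hsw]
  refine Finset.sum_congr rfl fun x hx => ?_
  refine Finset.sum_congr rfl fun y hy => ?_
  simp only [ite_mul, mul_ite, zero_mul, mul_zero, ite_zero_mul, zero_mul]
  have hadd : (x + y) i = x i + y i := Finsupp.add_apply x y i
  by_cases hxi : x i < t + 1
  · rw [Finset.sum_eq_single_of_mem (x i) (Finset.mem_range.2 hxi)]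
    · rw [if_pos rfl]
      by_cases hc : (x + y) i = t
      · have hyi : y i = t - x i := by omega
        have harg : (x + y).erase i = x.erase i + y.erase i := by
          ext j
          by_cases hj : j = i
          · subst hj; simp [Finsupp.erase_same]
          · simp [Finsupp.erase_ne hj]
        rw [if_pos hc, if_pos hyi, monomial_mul, harg]
      · rw [if_neg hc, if_neg]
        intro hcon
        exact hc (by omega)
    · intro e _ he
      have hne : ¬ x i = e := fun hc => he hc.symm
      simp [hne]
  · rw [if_neg (by omega : ¬ (x + y) i = t)]
    symm
    apply Finset.sum_eq_zero
    intro e he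
    have hne : ¬ x i = e := by
      have := Finset.mem_range.1 he
      omega
    simp [hne]

lemma coefv_mul_free {i : Fin n} {a : MvPolynomial (Fin n) K} (ha : a.degreeOf i = 0)
    (t : ℕ) (b : MvPolynomial (Fin n) K) :
    coefv i t (a * b) = a * coefv i t b := by
  rw [coefv_mul]
  rw [Finset.sum_eq_single 0]
  · rw [coefv_zero_eq_self ha, Nat.sub_zero]
  · intro e _ he
    rw [coefv_eq_zero_of_lt (by omega), zero_mul]
  · simp

lemma coefv_X_pow (i : Fin n) (e e' : ℕ) :
    coefv i e' (X i ^ e : MvPolynomial (Fin n) K) = if e = e' then 1 else 0 := by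
  rw [X_pow_eq_monomial, coefv_monomial, Finsupp.single_eq_same]
  split
  · rw [Finsupp.erase_single, monomial_zero', C_1]
  · rfl

lemma coefv_X_pow_mul {i : Fin n} {e t : ℕ} (h : e ≤ t) (b : MvPolynomial (Fin n) K) :
    coefv i t (X i ^ e * b) = coefv i (t - e) b := by
  rw [coefv_mul]
  rw [Finset.sum_eq_single e]
  · rw [coefv_X_pow, if_pos rfl, one_mul]
  · intro e' _ he'
    rw [coefv_X_pow, if_neg (Ne.symm he'), zero_mul]
  · intro hmem
    exact absurd (Finset.mem_range.2 (by omega)) hmem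

lemma sum_coefv (i : Fin n) (F : MvPolynomial (Fin n) K) :
    ∑ t ∈ Finset.range (F.degreeOf i + 1), coefv i t F * X i ^ t = F := by
  classical
  apply MvPolynomial.ext; intro ν
  rw [coeff_sum]
  simp only [X_pow_eq_monomial, coeff_mul_monomial']
  rw [Finset.sum_eq_single (ν i)]
  · by_cases hle : ν i ≤ F.degreeOf i
    · have hsle : Finsupp.single i (ν i) ≤ ν := Finsupp.single_le_iff.2 le_rfl
      rw [if_pos hsle, coeff_coefv]
      have hsub : (ν - Finsupp.single i (ν i)) i = 0 := by simp
      rw [if_pos hsub, mul_one]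
      congr 1
      ext j
      by_cases hj : j = i
      · subst hj; simp
      · simp [Finsupp.single_apply, Ne.symm hj]
    · rw [coefv_eq_zero_of_lt (by omega)]
      simp only [coeff_zero, zero_mul, ite_self]
      symm
      rw [← MvPolynomial.notMem_support_iff]
      intro hmem
      exact hle (MvPolynomial.monomial_le_degreeOf i hmem)
  · intro t _ ht
    by_cases hsle : Finsupp.single i t ≤ ν
    · have ht' : t < ν i :=
        lt_of_le_of_ne (by simpa [Finsupp.single_le_iff] using hsle) ht
      rw [if_pos hsle, coeff_coefv, if_neg (by
        simp only [Finsupp.tsub_apply, Finsupp.single_eq_same]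
        omega)]
      exact zero_mul 1
    · rw [if_neg hsle]
  · intro hmem
    have hd : F.degreeOf i < ν i := by
      by_contra hc
      exact hmem (Finset.mem_range.2 (by omega))
    rw [coefv_eq_zero_of_lt hd]
    simp

end Aux2
section Aux3

variable {n : ℕ} {K : Type*} [Field K]

lemma degreeOf_free_mul_le {i : Fin n} {a : MvPolynomial (Fin n) K}
    (ha : a.degreeOf i = 0) (b : MvPolynomial (Fin n) K) :
    (a * b).degreeOf i ≤ b.degreeOf i := by
  have := MvPolynomial.degreeOf_mul_le i a b
  omega

lemma degreeOf_pow_free {i : Fin n} {a : MvPolynomial (Fin n) K}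
    (ha : a.degreeOf i = 0) (k : ℕ) : (a ^ k).degreeOf i = 0 := by
  induction k with
  | zero => rw [pow_zero, ← C_1]; exact MvPolynomial.degreeOf_C 1 i
  | succ k ih =>
    rw [pow_succ]
    have := MvPolynomial.degreeOf_mul_le i (a ^ k) a
    omega

lemma degreeOf_X_pow_le (i : Fin n) (e : ℕ) :
    (X i ^ e : MvPolynomial (Fin n) K).degreeOf i ≤ e := by
  refine MvPolynomial.degreeOf_le_iff.2 fun ν hν => ?_
  rw [X_pow_eq_monomial] at hν
  have := MvPolynomial.support_monomial_subset hν
  rw [Finset.mem_singleton] at this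
  simp [this]

lemma degreeOf_lcv_self (i : Fin n) (F : MvPolynomial (Fin n) K) :
    (lcv i F).degreeOf i = 0 := degreeOf_coefv_self i _ F

lemma pdivAux_spec (i : Fin n) (F : MvPolynomial (Fin n) K) (hF : 0 < F.degreeOf i) :
    ∀ (f : ℕ) (Q R : MvPolynomial (Fin n) K), R.degreeOf i ≤ F.degreeOf i - 1 + f →
      (pdivAux i F f (Q, R)).1 * F + (pdivAux i F f (Q, R)).2 = lcv i F ^ f * (Q * F + R) ∧
        (pdivAux i F f (Q, R)).2.degreeOf i < F.degreeOf i := by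
  intro f
  induction f with
  | zero =>
    intro Q R hR
    simp only [pdivAux, pow_zero, one_mul]
    exact ⟨trivial, by omega⟩
  | succ f ih =>
    intro Q R hR
    by_cases hlt : R.degreeOf i < F.degreeOf i
    · simp only [pdivAux, hlt, if_true]
      constructor
      · ring
      · have h1 := degreeOf_pow_free (degreeOf_lcv_self i F) (f + 1)
        have := degreeOf_free_mul_le h1 R
        omega
    · simp only [pdivAux, hlt, if_false]
      set d := F.degreeOf i with hd
      set D := R.degreeOf i with hD
      have hDd : d ≤ D := by omega
      set c := coefv i D R with hc
      set R₁ := lcv i F * R - c * X i ^ (D - d) * F with hR₁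
      set Q₁ := lcv i F * Q + c * X i ^ (D - d) with hQ₁
      have hdc : c.degreeOf i = 0 := degreeOf_coefv_self i D R
      have hdegR₁ : R₁.degreeOf i ≤ D := by
        have h1 := MvPolynomial.degreeOf_sub_le i (lcv i F * R) (c * X i ^ (D - d) * F)
        rw [← hR₁] at h1
        have h2 := degreeOf_free_mul_le (degreeOf_lcv_self i F) R
        have h3 := MvPolynomial.degreeOf_mul_le i (c * X i ^ (D - d)) F
        have h4 := MvPolynomial.degreeOf_mul_le i c (X i ^ (D - d))
        have h5 := degreeOf_X_pow_le (K := K) i (D - d)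
        omega
      have hslice : coefv i D R₁ = 0 := by
        rw [hR₁, coefv_sub, coefv_mul_free (degreeOf_lcv_self i F),
          mul_assoc, coefv_mul_free hdc, coefv_X_pow_mul (Nat.sub_le D d)]
        have : D - (D - d) = d := by omega
        rw [this]
        rw [← hc, ← lcv]
        ring
      have hdegR₁' : R₁.degreeOf i ≤ F.degreeOf i - 1 + f := by
        have := degreeOf_le_pred hdegR₁ hslice
        omega
      obtain ⟨heq, hdeg⟩ := ih Q₁ R₁ hdegR₁'
      refine ⟨?_, hdeg⟩
      rw [heq, hQ₁, hR₁]
      rw [pow_succ]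
      ring
  
lemma prem_spec {i : Fin n} {F : MvPolynomial (Fin n) K} (hF : 0 < F.degreeOf i)
    (G : MvPolynomial (Fin n) K) :
    ∃ Q, lcv i F ^ (G.degreeOf i + 1 - F.degreeOf i) * G = Q * F + prem G F i ∧
      (prem G F i).degreeOf i < F.degreeOf i := by
  obtain ⟨heq, hdeg⟩ := pdivAux_spec i F hF (G.degreeOf i + 1 - F.degreeOf i) 0 G (by omega)
  rw [zero_mul, zero_add] at heq
  exact ⟨(pdivAux i F (G.degreeOf i + 1 - F.degreeOf i) (0, G)).1,
    by rw [← heq]; rfl, hdeg⟩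

lemma prem_zero_left {i : Fin n} {F : MvPolynomial (Fin n) K} (hF : 0 < F.degreeOf i) :
    prem 0 F i = 0 := by
  rw [prem, MvPolynomial.degreeOf_zero, Nat.zero_add, Nat.sub_eq_zero_of_le hF]
  rfl

end Aux3
section Aux4

variable {n : ℕ} {K : Type*} [Field K]

lemma premTS_append (P : MvPolynomial (Fin n) K) (L : List (MvPolynomial (Fin n) K))
    (T : MvPolynomial (Fin n) K) :
    premTS P (L ++ [T]) = premTS (premLv P T) L := by
  rw [premTS, List.foldr_append]
  rfl

lemma resTS_append (A : MvPolynomial (Fin n) K) (L : List (MvPolynomial (Fin n) K))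
    (T : MvPolynomial (Fin n) K) :
    resTS A (L ++ [T]) = resTS (resLv A T) L := by
  rw [resTS, List.foldr_append]
  rfl

lemma setOf_mem_append (L : List (MvPolynomial (Fin n) K)) (T : MvPolynomial (Fin n) K) :
    {x | x ∈ L ++ [T]} = insert T {x | x ∈ L} := by
  ext x
  simp [List.mem_append, or_comm]

lemma span_mono_append (L : List (MvPolynomial (Fin n) K)) (T : MvPolynomial (Fin n) K) :
    Ideal.span {x | x ∈ L} ≤ Ideal.span {x | x ∈ L ++ [T]} := by
  apply Ideal.span_mono
  intro x hx
  simp only [Set.mem_setOf_eq, List.mem_append] at *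
  exact Or.inl hx

lemma vars_nonempty_of_cls_pos {T : MvPolynomial (Fin n) K} (h : 0 < cls T) :
    T.vars.Nonempty := by
  rcases Finset.eq_empty_or_nonempty T.vars with he | hne
  · exfalso
    have : cls T = 0 := by rw [cls, he]; rfl
    omega
  · exact hne

lemma cls_eq_max' {T : MvPolynomial (Fin n) K} (h : T.vars.Nonempty) :
    cls T = (T.vars.max' h : ℕ) + 1 := by
  rw [cls]
  apply le_antisymm
  · apply Finset.sup_le
    intro b hb
    have := Finset.le_max' T.vars b hb
    omega
  · exact Finset.le_sup (f := fun i : Fin n => (i : ℕ) + 1) (Finset.max'_mem T.vars h)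

lemma cls_le_of_mem_vars {T : MvPolynomial (Fin n) K} {j : Fin n} (h : j ∈ T.vars) :
    (j : ℕ) + 1 ≤ cls T := by
  rw [cls]
  exact Finset.le_sup (f := fun i : Fin n => (i : ℕ) + 1) h

lemma degreeOf_eq_zero_of_not_mem_vars {T : MvPolynomial (Fin n) K} {j : Fin n}
    (h : j ∉ T.vars) : T.degreeOf j = 0 := by
  refine Nat.le_zero.1 (MvPolynomial.degreeOf_le_iff.2 fun ν hν => ?_)
  by_contra hc
  apply h
  rw [MvPolynomial.mem_vars]
  exact ⟨ν, hν, Finsupp.mem_support_iff.2 (by omega)⟩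

lemma one_le_degreeOf_of_mem_vars {T : MvPolynomial (Fin n) K} {j : Fin n}
    (h : j ∈ T.vars) : 1 ≤ T.degreeOf j := by
  rw [MvPolynomial.mem_vars] at h
  obtain ⟨ν, hν, hj⟩ := h
  have h1 := MvPolynomial.monomial_le_degreeOf j hν
  have h2 := Finsupp.mem_support_iff.1 hj
  omega

lemma degreeOf_free_of_cls_lt {A B : MvPolynomial (Fin n) K} (hB : B.vars.Nonempty)
    (h : cls A < cls B) : A.degreeOf (B.vars.max' hB) = 0 := by
  apply degreeOf_eq_zero_of_not_mem_vars
  intro hmem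
  have h1 := cls_le_of_mem_vars hmem
  rw [cls_eq_max' hB] at h
  omega

lemma degreeOf_ini_self {T : MvPolynomial (Fin n) K} (h : T.vars.Nonempty) :
    (ini T).degreeOf (T.vars.max' h) = 0 := by
  rw [ini, dif_pos h]
  exact degreeOf_lcv_self _ T

lemma degreeOf_ini_le {T : MvPolynomial (Fin n) K} (j : Fin n) :
    (ini T).degreeOf j ≤ T.degreeOf j := by
  rw [ini]
  split
  · exact degreeOf_coefv_le _ j _ T
  · exact le_rfl

lemma degreeOf_list_prod_free {i : Fin n} {l : List (MvPolynomial (Fin n) K)}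
    (h : ∀ a ∈ l, a.degreeOf i = 0) : l.prod.degreeOf i = 0 := by
  induction l with
  | nil => rw [List.prod_nil, ← C_1]; exact MvPolynomial.degreeOf_C 1 i
  | cons a l ih =>
    rw [List.prod_cons]
    have h1 := h a List.mem_cons_self
    have h2 := ih fun b hb => h b (List.mem_cons_of_mem a hb)
    have := MvPolynomial.degreeOf_mul_le i a l.prod
    omega

lemma coefv_mem_span {i : Fin n} {S : Set (MvPolynomial (Fin n) K)}
    (hS : ∀ g ∈ S, g.degreeOf i = 0) {x : MvPolynomial (Fin n) K}
    (hx : x ∈ Ideal.span S) : ∀ t, coefv i t x ∈ Ideal.span S := by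
  refine Submodule.span_induction ?_ ?_ ?_ ?_ hx
  · intro g hg t
    rcases Nat.eq_zero_or_pos t with rfl | ht
    · rw [coefv_zero_eq_self (hS g hg)]
      exact Ideal.subset_span hg
    · rw [coefv_eq_zero_of_lt (by rw [hS g hg]; omega)]
      exact Ideal.zero_mem _
  · intro t
    rw [coefv_zero]
    exact Ideal.zero_mem _
  · intro a b _ _ ha hb t
    rw [coefv_add]
    exact Ideal.add_mem _ (ha t) (hb t)
  · intro c a _ ha t
    rw [smul_eq_mul, coefv_mul]
    apply Ideal.sum_mem
    intro e _
    exact Ideal.mul_mem_left _ _ (ha (t - e))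

lemma claimC {i : Fin n} {T : MvPolynomial (Fin n) K} (hd : 0 < T.degreeOf i)
    {J : Ideal (MvPolynomial (Fin n) K)}
    (hJ : ∀ x ∈ J, ∀ t, coefv i t x ∈ J) :
    ∀ (D : ℕ) (Q W : MvPolynomial (Fin n) K), Q.degreeOf i ≤ D →
      W.degreeOf i < T.degreeOf i → Q * T - W ∈ J → lcv i T ^ (D + 1) * W ∈ J := by
  intro D
  induction D with
  | zero =>
    intro Q W hQ hW hmem
    have hslice := hJ _ hmem (T.degreeOf i)
    rw [coefv_sub, coefv_mul_free (Nat.le_zero.1 hQ), coefv_eq_zero_of_lt hW,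
      sub_zero, ← lcv] at hslice
    have : lcv i T ^ (0 + 1) * W
        = -(lcv i T * (Q * T - W)) + (Q * lcv i T) * T := by ring
    rw [this]
    exact Ideal.add_mem _ (neg_mem (Ideal.mul_mem_left _ _ hmem))
      (Ideal.mul_mem_right _ _ hslice)
  | succ D ih =>
    intro Q W hQ hW hmem
    set d := T.degreeOf i with hdd
    set c := coefv i (D + 1) Q with hc
    have hcfree : c.degreeOf i = 0 := degreeOf_coefv_self i _ Q
    have hslice : c * lcv i T ∈ J := by
      have h1 := hJ _ hmem (D + 1 + d)
      rw [coefv_sub, coefv_eq_zero_of_lt (F := W) (by omega), sub_zero, coefv_mul] at h1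
      rw [Finset.sum_eq_single (D + 1)] at h1
      · rw [← hc] at h1
        have he : D + 1 + d - (D + 1) = d := by omega
        rw [he, ← lcv] at h1
        exact h1
      · intro e _ he
        rcases Nat.lt_or_ge e (D + 1) with h | h
        · rw [coefv_eq_zero_of_lt (i := i) (F := T) (by omega), mul_zero]
        · rw [coefv_eq_zero_of_lt (show Q.degreeOf i < e by omega), zero_mul]
      · intro hne
        exact absurd (Finset.mem_range.2 (by omega)) hne
    set Q₁ := lcv i T * (Q - c * X i ^ (D + 1)) with hQ₁
    set W₁ := lcv i T * W with hW₁
    have hQsub : (Q - c * X i ^ (D + 1)).degreeOf i ≤ D := by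
      have hsl : coefv i (D + 1) (Q - c * X i ^ (D + 1)) = 0 := by
        rw [coefv_sub, coefv_mul_free hcfree, coefv_X_pow, if_pos rfl, mul_one, ← hc,
          sub_self]
      have hle : (Q - c * X i ^ (D + 1)).degreeOf i ≤ D + 1 := by
        have h1 := MvPolynomial.degreeOf_sub_le i Q (c * X i ^ (D + 1))
        have h2 := MvPolynomial.degreeOf_mul_le i c (X i ^ (D + 1))
        have h3 := degreeOf_X_pow_le (K := K) i (D + 1)
        omega
      have := degreeOf_le_pred hle hsl
      omega
    have hQ₁deg : Q₁.degreeOf i ≤ D := by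
      have h1 := degreeOf_free_mul_le (degreeOf_lcv_self i T) (Q - c * X i ^ (D + 1))
      rw [← hQ₁] at h1
      omega
    have hW₁deg : W₁.degreeOf i < d := by
      have h1 := degreeOf_free_mul_le (degreeOf_lcv_self i T) W
      rw [← hW₁] at h1
      omega
    have hmem₁ : Q₁ * T - W₁ ∈ J := by
      have heq : Q₁ * T - W₁
          = lcv i T * (Q * T - W) - (c * lcv i T) * (X i ^ (D + 1) * T) := by
        rw [hQ₁, hW₁]; ring
      rw [heq]
      exact Ideal.sub_mem _ (Ideal.mul_mem_left _ _ hmem)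
        (Ideal.mul_mem_right _ _ hslice)
    have := ih Q₁ W₁ hQ₁deg hW₁deg hmem₁
    have heq2 : lcv i T ^ (D + 1 + 1) * W = lcv i T ^ (D + 1) * W₁ := by
      rw [hW₁]; ring
    rw [heq2]
    exact this

end Aux4
section Aux5

variable {n : ℕ} {K : Type*} [Field K]

lemma sylvester_rowsum (i : Fin n) (A T : MvPolynomial (Fin n) K)
    (hT : 0 < T.degreeOf i) (r : Fin (T.degreeOf i + A.degreeOf i)) :
    ((sylvester i A T).mulVec fun c : Fin (T.degreeOf i + A.degreeOf i) =>
        (X i : MvPolynomial (Fin n) K) ^ (T.degreeOf i + A.degreeOf i - 1 - (c : ℕ))) r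
      = if (r : ℕ) < T.degreeOf i then
          X i ^ (T.degreeOf i - 1 - (r : ℕ)) * A
        else
          X i ^ (T.degreeOf i + A.degreeOf i - 1 - (r : ℕ)) * T := by
  classical
  have hrN : (r : ℕ) < T.degreeOf i + A.degreeOf i := r.2
  rw [Matrix.mulVec, dotProduct]
  simp only [sylvester, Matrix.of_apply]
  by_cases hr : (r : ℕ) < T.degreeOf i
  · simp only [hr, if_true]
    trans (∑ j ∈ Finset.range (A.degreeOf i + 1),
      X i ^ (T.degreeOf i - 1 - (r : ℕ)) * (coefv i j A * X i ^ j))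
    swap
    · rw [← Finset.mul_sum, sum_coefv]
    rw [Fin.sum_univ_eq_sum_range (fun c =>
      (if (r : ℕ) ≤ c ∧ c ≤ (r : ℕ) + A.degreeOf i then
          coefv i (A.degreeOf i + (r : ℕ) - c) A else 0) *
        X i ^ (T.degreeOf i + A.degreeOf i - 1 - c)) (T.degreeOf i + A.degreeOf i)]
    simp only [ite_mul, zero_mul]
    rw [Finset.sum_ite, Finset.sum_const_zero, add_zero]
    apply Finset.sum_nbij' (fun c => (r : ℕ) + A.degreeOf i - c)
      (fun j => (r : ℕ) + A.degreeOf i - j)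
    · intro c hc
      simp only [Finset.mem_filter, Finset.mem_range] at hc
      rw [Finset.mem_range]
      omega
    · intro j hj
      rw [Finset.mem_range] at hj
      simp only [Finset.mem_filter, Finset.mem_range]
      omega
    · intro c hc
      simp only [Finset.mem_filter, Finset.mem_range] at hc
      omega
    · intro j hj
      rw [Finset.mem_range] at hj
      omega
    · intro c hc
      simp only [Finset.mem_filter, Finset.mem_range] at hc
      obtain ⟨hcN, hc1, hc2⟩ := hc
      have h1 : A.degreeOf i + (r : ℕ) - c = (r : ℕ) + A.degreeOf i - c := by omega
      have h2 : T.degreeOf i + A.degreeOf i - 1 - c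
          = (T.degreeOf i - 1 - (r : ℕ)) + ((r : ℕ) + A.degreeOf i - c) := by omega
      rw [h1, h2, pow_add]
      ring
  · simp only [hr, if_false]
    trans (∑ j ∈ Finset.range (T.degreeOf i + 1),
      X i ^ (T.degreeOf i + A.degreeOf i - 1 - (r : ℕ)) * (coefv i j T * X i ^ j))
    swap
    · rw [← Finset.mul_sum, sum_coefv]
    rw [Fin.sum_univ_eq_sum_range (fun c =>
      (if (r : ℕ) - T.degreeOf i ≤ c ∧ c ≤ (r : ℕ) then
        coefv i (T.degreeOf i + ((r : ℕ) - T.degreeOf i) - c) T else 0) *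
        X i ^ (T.degreeOf i + A.degreeOf i - 1 - c)) (T.degreeOf i + A.degreeOf i)]
    simp only [ite_mul, zero_mul]
    rw [Finset.sum_ite, Finset.sum_const_zero, add_zero]
    apply Finset.sum_nbij' (fun c => (r : ℕ) - c) (fun j => (r : ℕ) - j)
    · intro c hc
      simp only [Finset.mem_filter, Finset.mem_range] at hc
      rw [Finset.mem_range]
      omega
    · intro j hj
      rw [Finset.mem_range] at hj
      simp only [Finset.mem_filter, Finset.mem_range]
      omega
    · intro c hc
      simp only [Finset.mem_filter, Finset.mem_range] at hc
      omega
    · intro j hj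
      rw [Finset.mem_range] at hj
      omega
    · intro c hc
      simp only [Finset.mem_filter, Finset.mem_range] at hc
      obtain ⟨hcN, hc1, hc2⟩ := hc
      have h1 : T.degreeOf i + ((r : ℕ) - T.degreeOf i) - c = (r : ℕ) - c := by omega
      have h2 : T.degreeOf i + A.degreeOf i - 1 - c
          = (T.degreeOf i + A.degreeOf i - 1 - (r : ℕ)) + ((r : ℕ) - c) := by omega
      rw [h1, h2, pow_add]
      ring

lemma resv_bezout {i : Fin n} {T : MvPolynomial (Fin n) K} (hT : 0 < T.degreeOf i)
    (A : MvPolynomial (Fin n) K) :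
    ∃ U V : MvPolynomial (Fin n) K, resv A T i = U * A + V * T := by
  classical
  have hN1 : 0 < T.degreeOf i + A.degreeOf i := by omega
  set S := sylvester i A T with hS
  set v : Fin (T.degreeOf i + A.degreeOf i) → MvPolynomial (Fin n) K :=
    fun c => (X i : MvPolynomial (Fin n) K) ^ (T.degreeOf i + A.degreeOf i - 1 - (c : ℕ))
    with hv
  have key : S.adjugate.mulVec (S.mulVec v) = S.det • v := by
    rw [Matrix.mulVec_mulVec, Matrix.adjugate_mul, Matrix.smul_mulVec,
      Matrix.one_mulVec]
  set last : Fin (T.degreeOf i + A.degreeOf i) := ⟨T.degreeOf i + A.degreeOf i - 1,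
    by omega⟩ with hlast
  have hvlast : v last = 1 := by
    rw [hv]
    simp [hlast]
  have hdet : S.det = ∑ k, S.adjugate last k * (S.mulVec v) k := by
    have h1 := congrFun key last
    rw [Pi.smul_apply, hvlast, smul_eq_mul, mul_one] at h1
    rw [← h1, Matrix.mulVec, dotProduct]
  refine ⟨∑ k : Fin (T.degreeOf i + A.degreeOf i), if (k : ℕ) < T.degreeOf i then
      S.adjugate last k * X i ^ (T.degreeOf i - 1 - (k : ℕ)) else 0,
    ∑ k : Fin (T.degreeOf i + A.degreeOf i), if (k : ℕ) < T.degreeOf i then 0 else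
      S.adjugate last k * X i ^ (T.degreeOf i + A.degreeOf i - 1 - (k : ℕ)), ?_⟩
  have hres : resv A T i = S.det := by rw [hS]; rfl
  rw [hres, hdet, Finset.sum_mul, Finset.sum_mul, ← Finset.sum_add_distrib]
  apply Finset.sum_congr rfl
  intro k _
  rw [sylvester_rowsum i A T hT k]
  by_cases hk : (k : ℕ) < T.degreeOf i
  · simp only [hk, if_true]
    ring
  · simp only [hk, if_false]
    ring

end Aux5
section Aux6

variable {n : ℕ} {K : Type*} [Field K]

lemma span_nil_eq_bot :
    Ideal.span {x | x ∈ ([] : List (MvPolynomial (Fin n) K))} = ⊥ := by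
  rw [show {x | x ∈ ([] : List (MvPolynomial (Fin n) K))} = (∅ : Set _) by simp]
  exact Ideal.span_empty

lemma mem_span_append {L : List (MvPolynomial (Fin n) K)} {T' x : MvPolynomial (Fin n) K}
    (h : x ∈ Ideal.span {y | y ∈ L ++ [T']}) :
    ∃ a z, z ∈ Ideal.span {y | y ∈ L} ∧ x = a * T' + z := by
  rw [setOf_mem_append] at h
  exact Ideal.mem_span_insert.1 h

lemma ini_ne_zero {T : MvPolynomial (Fin n) K} (hv : T.vars.Nonempty) : ini T ≠ 0 := by
  rw [ini, dif_pos hv]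
  apply lcv_ne_zero
  intro h0
  rw [h0] at hv
  simp [MvPolynomial.vars_0] at hv

lemma resTS_ini_ne_zero {L : List (MvPolynomial (Fin n) K)} {T' : MvPolynomial (Fin n) K}
    (hv : T'.vars.Nonempty)
    (hreg : ∀ j, 0 < j → j < (L ++ [T']).length →
      resTS (ini ((L ++ [T']).getD j 0)) ((L ++ [T']).take j) ≠ 0) :
    resTS (ini T') L ≠ 0 := by
  by_cases hL : L = []
  · subst hL
    exact ini_ne_zero hv
  · have hlen : 0 < L.length := List.length_pos_iff.2 hL
    have h := hreg L.length hlen (by simp)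
    rwa [List.getD_append_right _ _ _ _ le_rfl, Nat.sub_self, List.take_left] at h

lemma regHyp_append {L : List (MvPolynomial (Fin n) K)} {T' : MvPolynomial (Fin n) K}
    (h : ∀ j, 0 < j → j < (L ++ [T']).length →
      resTS (ini ((L ++ [T']).getD j 0)) ((L ++ [T']).take j) ≠ 0) :
    ∀ j, 0 < j → j < L.length →
      resTS (ini (L.getD j 0)) (L.take j) ≠ 0 := by
  intro j hj hjlen
  have hh := h j hj (by simp; omega)
  rwa [List.getD_append _ _ _ _ hjlen, List.take_append,
    Nat.sub_eq_zero_of_le (le_of_lt hjlen), List.take_zero, List.append_nil] at hh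

lemma prodIni_append (L : List (MvPolynomial (Fin n) K)) (T' : MvPolynomial (Fin n) K) :
    ((L ++ [T']).map ini).prod = (L.map ini).prod * ini T' := by
  rw [List.map_append, List.prod_append, List.map_singleton, List.prod_singleton]

lemma lift_mem {L : List (MvPolynomial (Fin n) K)} {T' : MvPolynomial (Fin n) K}
    (hv : T'.vars.Nonempty) {z Qz Rz : MvPolynomial (Fin n) K} {q : ℕ}
    (heq : lcv (T'.vars.max' hv) T' ^ q * z = Qz * T' + Rz)
    {t : ℕ} (hmem : (L.map ini).prod ^ t * Rz ∈ Ideal.span {x | x ∈ L}) :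
    ((L ++ [T']).map ini).prod ^ (q + t) * z ∈ Ideal.span {x | x ∈ L ++ [T']} := by
  have hini : ini T' = lcv (T'.vars.max' hv) T' := dif_pos hv
  rw [prodIni_append, hini]
  set P' := (L.map ini).prod with hP'
  set I := lcv (T'.vars.max' hv) T' with hI
  have key : (P' * I) ^ (q + t) * z
      = (P' ^ (q + t) * I ^ t * Qz) * T' + (P' ^ q * I ^ t) * (P' ^ t * Rz) := by
    calc (P' * I) ^ (q + t) * z = (P' ^ (q + t) * I ^ t) * (I ^ q * z) := by ring
    _ = (P' ^ (q + t) * I ^ t) * (Qz * T' + Rz) := by rw [heq]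
    _ = _ := by ring
  rw [key]
  have hT'mem : T' ∈ Ideal.span {x | x ∈ L ++ [T']} := Ideal.subset_span (by simp)
  exact Ideal.add_mem _ (Ideal.mul_mem_left _ _ hT'mem)
    (Ideal.mul_mem_left _ _ (span_mono_append L T' hmem))

/-- Lemma E: if `premTS y L = 0` then some power of the product of initials times `y`
lies in the span of `L`. -/
lemma mem_span_of_premTS_zero (L : List (MvPolynomial (Fin n) K))
    (hne : ∀ T ∈ L, T.vars.Nonempty) :
    ∀ y : MvPolynomial (Fin n) K, premTS y L = 0 →
      ∃ s, (L.map ini).prod ^ s * y ∈ Ideal.span {x | x ∈ L} := by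
  induction L using List.reverseRecOn with
  | nil =>
    intro y hy
    have : y = 0 := hy
    rw [this]
    exact ⟨0, by rw [mul_zero]; exact Ideal.zero_mem _⟩
  | append_singleton L T' ih =>
    intro y hy
    have hv : T'.vars.Nonempty := hne T' (by simp)
    have hd' : 0 < T'.degreeOf (T'.vars.max' hv) :=
      one_le_degreeOf_of_mem_vars (Finset.max'_mem _ hv)
    rw [premTS_append, premLv, dif_pos hv] at hy
    obtain ⟨Q, heq, hdeg⟩ := prem_spec hd' y
    obtain ⟨t, hmem⟩ := ih (fun T hT => hne T (by simp [hT])) _ hy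
    exact ⟨_, lift_mem hv heq hmem⟩

end Aux6
section Aux7

variable {n : ℕ} {K : Type*} [Field K]

lemma degreeOf_det_free {N : ℕ} {i : Fin n}
    (M : Matrix (Fin N) (Fin N) (MvPolynomial (Fin n) K))
    (h : ∀ r c, (M r c).degreeOf i = 0) : M.det.degreeOf i = 0 := by
  refine Nat.le_zero.1 ?_
  rw [Matrix.det_apply]
  refine le_trans (MvPolynomial.degreeOf_sum_le i _ _) ?_
  rw [Finset.sup_le_iff]
  intro σ _
  have hprod : (∏ c, M (σ c) c).degreeOf i = 0 := by
    refine Finset.prod_induction _ (fun x : MvPolynomial (Fin n) K => degreeOf i x = 0) ?_ ?_ ?_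
    · intro a b ha hb
      have := MvPolynomial.degreeOf_mul_le i a b
      omega
    · rw [← C_1]
      exact MvPolynomial.degreeOf_C 1 i
    · intro c _
      exact h _ _
  rcases Int.units_eq_one_or (Equiv.Perm.sign σ) with hs | hs <;> rw [hs]
  · rw [one_smul]
    omega
  · rw [Units.smul_def]
    simp only [Units.val_neg, Units.val_one, neg_one_zsmul]
    rw [MvPolynomial.degreeOf_neg]
    omega

lemma degreeOf_resv_free (A T : MvPolynomial (Fin n) K) (i : Fin n) :
    (resv A T i).degreeOf i = 0 := by
  rw [resv]
  apply degreeOf_det_free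
  intro r c
  simp only [sylvester, Matrix.of_apply]
  split_ifs
  · exact degreeOf_coefv_self i _ A
  · exact MvPolynomial.degreeOf_zero i
  · exact degreeOf_coefv_self i _ T
  · exact MvPolynomial.degreeOf_zero i

lemma strip_pow {P' I : MvPolynomial (Fin n) K} {J : Ideal (MvPolynomial (Fin n) K)}
    (hcan : ∀ w s', P' ^ s' * (I * w) ∈ J → ∃ t, P' ^ t * w ∈ J) :
    ∀ (k : ℕ) (w : MvPolynomial (Fin n) K) (s' : ℕ),
      P' ^ s' * (I ^ k * w) ∈ J → ∃ t, P' ^ t * w ∈ J := by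
  intro k
  induction k with
  | zero =>
    intro w s' hw
    exact ⟨s', by rwa [pow_zero, one_mul] at hw⟩
  | succ k ihk =>
    intro w s' hw
    have hw' : P' ^ s' * (I ^ k * (I * w)) ∈ J := by
      have heq : P' ^ s' * (I ^ k * (I * w)) = P' ^ s' * (I ^ (k + 1) * w) := by ring
      rw [heq]
      exact hw
    obtain ⟨t2, ht2⟩ := ihk (I * w) s' hw'
    exact hcan w t2 ht2

/-- The cancellation lemma: if `resTS A L ≠ 0` for a regular set `L`, then `A` can be
cancelled in saturated-ideal membership. -/
lemma cancel_regular (L : List (MvPolynomial (Fin n) K)) :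
    (∀ T ∈ L, T.vars.Nonempty) → List.Pairwise (fun A B => cls A < cls B) L →
    (∀ j, 0 < j → j < L.length → resTS (ini (L.getD j 0)) (L.take j) ≠ 0) →
    ∀ A : MvPolynomial (Fin n) K, resTS A L ≠ 0 →
    ∀ (z : MvPolynomial (Fin n) K) (s : ℕ),
      (L.map ini).prod ^ s * (A * z) ∈ Ideal.span {x | x ∈ L} →
      ∃ t, (L.map ini).prod ^ t * z ∈ Ideal.span {x | x ∈ L} := by
  induction L using List.reverseRecOn with
  | nil =>
    intro _ _ _ A hA z s hmem
    rw [span_nil_eq_bot, Ideal.mem_bot] at hmem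
    simp only [List.map_nil, List.prod_nil, one_pow, one_mul] at hmem
    have hA0 : A ≠ 0 := fun h => hA (by rw [h]; rfl)
    rcases mul_eq_zero.1 hmem with h | h
    · exact absurd h hA0
    · exact ⟨0, by rw [h, mul_zero]; exact Ideal.zero_mem _⟩
  | append_singleton L T' ih =>
    intro hne hpair hreg A hA z s hmem
    have hv : T'.vars.Nonempty := hne T' (by simp)
    have hd' : 0 < degreeOf (T'.vars.max' hv) T' :=
      one_le_degreeOf_of_mem_vars (Finset.max'_mem _ hv)
    have hini : ini T' = lcv (T'.vars.max' hv) T' := dif_pos hv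
    have hresI : resTS (lcv (T'.vars.max' hv) T') L ≠ 0 := by
      rw [← hini]
      exact resTS_ini_ne_zero hv hreg
    have hneL : ∀ T ∈ L, T.vars.Nonempty := fun T hT => hne T (by simp [hT])
    have hpairL : List.Pairwise (fun A B => cls A < cls B) L :=
      (List.pairwise_append.1 hpair).1
    have hregL := regHyp_append hreg
    have hclsL : ∀ T ∈ L, cls T < cls T' := fun T hT =>
      (List.pairwise_append.1 hpair).2.2 T hT T' (by simp)
    have hfreegen : ∀ g : MvPolynomial (Fin n) K, g ∈ {x | x ∈ L} →
        degreeOf (T'.vars.max' hv) g = 0 :=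
      fun g hg => degreeOf_free_of_cls_lt hv (hclsL g hg)
    have hJ : ∀ x ∈ Ideal.span {x | x ∈ L}, ∀ t,
        coefv (T'.vars.max' hv) t x ∈ Ideal.span {x | x ∈ L} := by
      intro x hx t
      exact coefv_mem_span hfreegen hx t
    have hfreeP' : ((List.map ini L).prod).degreeOf (T'.vars.max' hv) = 0 := by
      apply degreeOf_list_prod_free
      intro a ha
      rw [List.mem_map] at ha
      obtain ⟨T, hT, rfl⟩ := ha
      have h1 := degreeOf_ini_le (T := T) (T'.vars.max' hv)
      have h2 := degreeOf_free_of_cls_lt hv (hclsL T hT)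
      omega
    have hfreeI : (lcv (T'.vars.max' hv) T').degreeOf (T'.vars.max' hv) = 0 :=
      degreeOf_lcv_self _ T'
    have hfreePI : ((List.map ini L).prod * lcv (T'.vars.max' hv) T').degreeOf (T'.vars.max' hv) = 0 := by
      have := MvPolynomial.degreeOf_mul_le (T'.vars.max' hv) ((List.map ini L).prod) (lcv (T'.vars.max' hv) T')
      omega
    rw [prodIni_append, hini] at hmem
    have hT'mem : T' ∈ Ideal.span {x | x ∈ L ++ [T']} := Ideal.subset_span (by simp)

    have hBres : resTS (resv A T' (T'.vars.max' hv)) L ≠ 0 := by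
      rw [resTS_append, resLv, dif_pos hv] at hA
      exact hA
    have hBfree : (resv A T' (T'.vars.max' hv)).degreeOf (T'.vars.max' hv) = 0 :=
      degreeOf_resv_free A T' _
    obtain ⟨U, V, hUV⟩ := resv_bezout hd' A
    have h1 : ((List.map ini L).prod * lcv (T'.vars.max' hv) T') ^ s * (resv A T' (T'.vars.max' hv) * z) ∈ Ideal.span {x | x ∈ L ++ [T']} := by
      have heq : ((List.map ini L).prod * lcv (T'.vars.max' hv) T') ^ s * (resv A T' (T'.vars.max' hv) * z)
          = U * (((List.map ini L).prod * lcv (T'.vars.max' hv) T') ^ s * (A * z)) + (((List.map ini L).prod * lcv (T'.vars.max' hv) T') ^ s * V * z) * T' := by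
        rw [hUV]; ring
      rw [heq]
      exact Ideal.add_mem _ (Ideal.mul_mem_left _ _ hmem) (Ideal.mul_mem_left _ _ hT'mem)
    obtain ⟨Qz, hz, hdegz⟩ := prem_spec hd' z
    have h2 : ((List.map ini L).prod * lcv (T'.vars.max' hv) T') ^ s * (resv A T' (T'.vars.max' hv) * prem z T' (T'.vars.max' hv)) ∈
        Ideal.span {x | x ∈ L ++ [T']} := by
      have heq : ((List.map ini L).prod * lcv (T'.vars.max' hv) T') ^ s * (resv A T' (T'.vars.max' hv) * prem z T' (T'.vars.max' hv))
          = (lcv (T'.vars.max' hv) T') ^ (degreeOf (T'.vars.max' hv) z + 1 - degreeOf (T'.vars.max' hv) T')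
              * (((List.map ini L).prod * lcv (T'.vars.max' hv) T') ^ s * (resv A T' (T'.vars.max' hv) * z))
            - (((List.map ini L).prod * lcv (T'.vars.max' hv) T') ^ s * (resv A T' (T'.vars.max' hv)) * Qz) * T' := by
        calc ((List.map ini L).prod * lcv (T'.vars.max' hv) T') ^ s * (resv A T' (T'.vars.max' hv) * prem z T' (T'.vars.max' hv))
            = ((List.map ini L).prod * lcv (T'.vars.max' hv) T') ^ s * (resv A T' (T'.vars.max' hv))
                * ((lcv (T'.vars.max' hv) T') ^ (degreeOf (T'.vars.max' hv) z + 1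
                    - degreeOf (T'.vars.max' hv) T') * z)
              - (((List.map ini L).prod * lcv (T'.vars.max' hv) T') ^ s * (resv A T' (T'.vars.max' hv)) * Qz) * T' := by
              rw [hz]; ring
        _ = _ := by ring
      rw [heq]
      exact Ideal.sub_mem _ (Ideal.mul_mem_left _ _ h1) (Ideal.mul_mem_left _ _ hT'mem)
    obtain ⟨a, zz, hzz, hdecomp⟩ := mem_span_append h2
    have hmemJ : a * T' - ((List.map ini L).prod * lcv (T'.vars.max' hv) T') ^ s * (resv A T' (T'.vars.max' hv) * prem z T' (T'.vars.max' hv))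
        ∈ Ideal.span {x | x ∈ L} := by
      rw [hdecomp]
      have heq : a * T' - (a * T' + zz) = -zz := by ring
      rw [heq]
      exact neg_mem hzz
    have hWdeg : (((List.map ini L).prod * lcv (T'.vars.max' hv) T') ^ s * (resv A T' (T'.vars.max' hv) * prem z T' (T'.vars.max' hv))).degreeOf
        (T'.vars.max' hv) < degreeOf (T'.vars.max' hv) T' := by
      have hfp := degreeOf_pow_free hfreePI s
      have hm1 := degreeOf_free_mul_le hfp (resv A T' (T'.vars.max' hv) * prem z T' (T'.vars.max' hv))
      have hm2 := degreeOf_free_mul_le hBfree (prem z T' (T'.vars.max' hv))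
      omega
    have hclaim := claimC hd' hJ (a.degreeOf (T'.vars.max' hv)) a _ le_rfl hWdeg hmemJ
    have hre : (lcv (T'.vars.max' hv) T') ^ (a.degreeOf (T'.vars.max' hv) + 1)
          * (((List.map ini L).prod * lcv (T'.vars.max' hv) T') ^ s * (resv A T' (T'.vars.max' hv) * prem z T' (T'.vars.max' hv)))
        = ((List.map ini L).prod) ^ s * (resv A T' (T'.vars.max' hv) * ((lcv (T'.vars.max' hv) T') ^ (a.degreeOf (T'.vars.max' hv) + 1 + s)
            * prem z T' (T'.vars.max' hv))) := by
      ring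
    rw [hre] at hclaim
    obtain ⟨t1, hstrip1⟩ := ih hneL hpairL hregL (resv A T' (T'.vars.max' hv)) hBres _ s hclaim
    obtain ⟨t3, ht3⟩ := strip_pow
      (fun w s' hw => ih hneL hpairL hregL (lcv (T'.vars.max' hv) T') hresI w s' hw)
      (a.degreeOf (T'.vars.max' hv) + 1 + s) (prem z T' (T'.vars.max' hv)) t1 hstrip1
    exact ⟨_, lift_mem hv hz ht3⟩

/-- Main lemma (1): for a regular set, saturated-ideal membership implies
vanishing iterated pseudo-remainder. -/
lemma premTS_zero_of_mem_span (L : List (MvPolynomial (Fin n) K)) :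
    (∀ T ∈ L, T.vars.Nonempty) → List.Pairwise (fun A B => cls A < cls B) L →
    (∀ j, 0 < j → j < L.length → resTS (ini (L.getD j 0)) (L.take j) ≠ 0) →
    ∀ (y : MvPolynomial (Fin n) K) (s : ℕ),
      (L.map ini).prod ^ s * y ∈ Ideal.span {x | x ∈ L} → premTS y L = 0 := by
  induction L using List.reverseRecOn with
  | nil =>
    intro _ _ _ y s hmem
    rw [span_nil_eq_bot, Ideal.mem_bot] at hmem
    simp only [List.map_nil, List.prod_nil, one_pow, one_mul] at hmem
    exact hmem
  | append_singleton L T' ih =>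
    intro hne hpair hreg y s hmem
    have hv : T'.vars.Nonempty := hne T' (by simp)
    have hd' : 0 < degreeOf (T'.vars.max' hv) T' :=
      one_le_degreeOf_of_mem_vars (Finset.max'_mem _ hv)
    have hini : ini T' = lcv (T'.vars.max' hv) T' := dif_pos hv
    have hresI : resTS (lcv (T'.vars.max' hv) T') L ≠ 0 := by
      rw [← hini]
      exact resTS_ini_ne_zero hv hreg
    have hneL : ∀ T ∈ L, T.vars.Nonempty := fun T hT => hne T (by simp [hT])
    have hpairL : List.Pairwise (fun A B => cls A < cls B) L :=
      (List.pairwise_append.1 hpair).1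
    have hregL := regHyp_append hreg
    have hclsL : ∀ T ∈ L, cls T < cls T' := fun T hT =>
      (List.pairwise_append.1 hpair).2.2 T hT T' (by simp)
    have hfreegen : ∀ g : MvPolynomial (Fin n) K, g ∈ {x | x ∈ L} →
        degreeOf (T'.vars.max' hv) g = 0 :=
      fun g hg => degreeOf_free_of_cls_lt hv (hclsL g hg)
    have hJ : ∀ x ∈ Ideal.span {x | x ∈ L}, ∀ t,
        coefv (T'.vars.max' hv) t x ∈ Ideal.span {x | x ∈ L} := by
      intro x hx t
      exact coefv_mem_span hfreegen hx t
    have hfreeP' : ((List.map ini L).prod).degreeOf (T'.vars.max' hv) = 0 := by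
      apply degreeOf_list_prod_free
      intro a ha
      rw [List.mem_map] at ha
      obtain ⟨T, hT, rfl⟩ := ha
      have h1 := degreeOf_ini_le (T := T) (T'.vars.max' hv)
      have h2 := degreeOf_free_of_cls_lt hv (hclsL T hT)
      omega
    have hfreeI : (lcv (T'.vars.max' hv) T').degreeOf (T'.vars.max' hv) = 0 :=
      degreeOf_lcv_self _ T'
    have hfreePI : ((List.map ini L).prod * lcv (T'.vars.max' hv) T').degreeOf (T'.vars.max' hv) = 0 := by
      have := MvPolynomial.degreeOf_mul_le (T'.vars.max' hv) ((List.map ini L).prod) (lcv (T'.vars.max' hv) T')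
      omega
    rw [prodIni_append, hini] at hmem
    have hT'mem : T' ∈ Ideal.span {x | x ∈ L ++ [T']} := Ideal.subset_span (by simp)

    obtain ⟨Q, heq0, hdeg⟩ := prem_spec hd' y
    have h2 : ((List.map ini L).prod * lcv (T'.vars.max' hv) T') ^ s * prem y T' (T'.vars.max' hv) ∈
        Ideal.span {x | x ∈ L ++ [T']} := by
      have heq : ((List.map ini L).prod * lcv (T'.vars.max' hv) T') ^ s * prem y T' (T'.vars.max' hv)
          = (lcv (T'.vars.max' hv) T') ^ (degreeOf (T'.vars.max' hv) y + 1 - degreeOf (T'.vars.max' hv) T')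
              * (((List.map ini L).prod * lcv (T'.vars.max' hv) T') ^ s * y)
            - (((List.map ini L).prod * lcv (T'.vars.max' hv) T') ^ s * Q) * T' := by
        calc ((List.map ini L).prod * lcv (T'.vars.max' hv) T') ^ s * prem y T' (T'.vars.max' hv)
            = ((List.map ini L).prod * lcv (T'.vars.max' hv) T') ^ s
                * ((lcv (T'.vars.max' hv) T') ^ (degreeOf (T'.vars.max' hv) y + 1
                    - degreeOf (T'.vars.max' hv) T') * y)
              - (((List.map ini L).prod * lcv (T'.vars.max' hv) T') ^ s * Q) * T' := by
              rw [heq0]; ring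
        _ = _ := by ring
      rw [heq]
      exact Ideal.sub_mem _ (Ideal.mul_mem_left _ _ hmem) (Ideal.mul_mem_left _ _ hT'mem)
    obtain ⟨a, zz, hzz, hdecomp⟩ := mem_span_append h2
    have hmemJ : a * T' - ((List.map ini L).prod * lcv (T'.vars.max' hv) T') ^ s * prem y T' (T'.vars.max' hv)
        ∈ Ideal.span {x | x ∈ L} := by
      rw [hdecomp]
      have heq : a * T' - (a * T' + zz) = -zz := by ring
      rw [heq]
      exact neg_mem hzz
    have hWdeg : (((List.map ini L).prod * lcv (T'.vars.max' hv) T') ^ s * prem y T' (T'.vars.max' hv)).degreeOf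
        (T'.vars.max' hv) < degreeOf (T'.vars.max' hv) T' := by
      have hfp := degreeOf_pow_free hfreePI s
      have hm1 := degreeOf_free_mul_le hfp (prem y T' (T'.vars.max' hv))
      omega
    have hclaim := claimC hd' hJ (a.degreeOf (T'.vars.max' hv)) a _ le_rfl hWdeg hmemJ
    have hre : (lcv (T'.vars.max' hv) T') ^ (a.degreeOf (T'.vars.max' hv) + 1)
          * (((List.map ini L).prod * lcv (T'.vars.max' hv) T') ^ s * prem y T' (T'.vars.max' hv))
        = ((List.map ini L).prod) ^ s * ((lcv (T'.vars.max' hv) T') ^ (a.degreeOf (T'.vars.max' hv) + 1 + s)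
            * prem y T' (T'.vars.max' hv)) := by
      ring
    rw [hre] at hclaim
    obtain ⟨t3, ht3⟩ := strip_pow
      (fun w s' hw => cancel_regular L hneL hpairL hregL (lcv (T'.vars.max' hv) T') hresI w s' hw)
      (a.degreeOf (T'.vars.max' hv) + 1 + s) (prem y T' (T'.vars.max' hv)) s hclaim
    rw [premTS_append, premLv, dif_pos hv]
    exact ih hneL hpairL hregL (prem y T' (T'.vars.max' hv)) t3 ht3

end Aux7
section Aux8

variable {n : ℕ} {K : Type*} [Field K]

lemma cls_le_last {L : List (MvPolynomial (Fin n) K)} (hLne : L ≠ [])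
    (hpair : List.Pairwise (fun A B => cls A < cls B) L) :
    ∀ T ∈ L, cls T ≤ cls (L.getD (L.length - 1) 0) := by
  intro T hT
  have hlen : 0 < L.length := List.length_pos_iff.2 hLne
  obtain ⟨k, hk, hTk⟩ := List.mem_iff_getElem.1 hT
  have hgetD : L.getD (L.length - 1) 0 = L[L.length - 1] :=
    List.getD_eq_getElem L 0 (by omega)
  rw [hgetD]
  rcases Nat.lt_or_ge k (L.length - 1) with hlt | hge
  · have := List.pairwise_iff_getElem.1 hpair k (L.length - 1) hk (by omega) hlt
    rw [hTk] at this
    exact le_of_lt this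
  · have hk' : k = L.length - 1 := by omega
    subst hk'
    rw [← hTk]

end Aux8
/-- Let `T = [T_1, …, T_r]` be a regular set with `p_r = cls(T_r) < n`,
and let `P` be a polynomial of degree `d > 0` in a variable `x_m` with `m > p_r`.
Then `prem(P, T) = 0` iff `prem(P_j, T) = 0` for all coefficients `P_j` of `P`
w.r.t. `x_m`, `0 ≤ j ≤ d`. -/
theorem statement3 {n : ℕ} {K : Type*} [Field K] (L : List (MvPolynomial (Fin n) K))
    (hreg : RegularSet L)
    (hpr : cls (L.getD (L.length - 1) 0) < n)
    (P : MvPolynomial (Fin n) K) (m : Fin n)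
    (hm : cls (L.getD (L.length - 1) 0) < (m : ℕ) + 1)
    (hd : 0 < P.degreeOf m) :
    premTS P L = 0 ↔ ∀ j ≤ P.degreeOf m, premTS (coefv m j P) L = 0 := by
  classical
  obtain ⟨⟨hLne, hclspos, hchain⟩, hregj⟩ := hreg
  haveI : IsTrans (MvPolynomial (Fin n) K) (fun A B => cls A < cls B) :=
    ⟨fun a b c h1 h2 => h1.trans h2⟩
  have hpair : List.Pairwise (fun A B => cls A < cls B) L :=
    List.isChain_iff_pairwise.1 hchain
  have hne : ∀ T ∈ L, T.vars.Nonempty := fun T hT =>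
    vars_nonempty_of_cls_pos (hclspos T hT)
  -- every element of L is free of the variable m
  have hmv : ∀ T ∈ L, m ∉ T.vars := by
    intro T hT hmem
    have h1 := cls_le_of_mem_vars hmem
    have h2 := cls_le_last hLne hpair T hT
    omega
  have hmfree : ∀ g : MvPolynomial (Fin n) K, g ∈ {x | x ∈ L} → degreeOf m g = 0 :=
    fun g hg => degreeOf_eq_zero_of_not_mem_vars (hmv g hg)
  have hprodfree : degreeOf m ((L.map ini).prod) = 0 := by
    apply degreeOf_list_prod_free
    intro a ha
    rw [List.mem_map] at ha
    obtain ⟨T, hT, rfl⟩ := ha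
    have h1 := degreeOf_ini_le (T := T) m
    have h2 := degreeOf_eq_zero_of_not_mem_vars (hmv T hT)
    omega
  -- the saturated-ideal characterization of premTS = 0
  have hchar : ∀ y : MvPolynomial (Fin n) K, premTS y L = 0 ↔
      ∃ s, (L.map ini).prod ^ s * y ∈ Ideal.span {x | x ∈ L} := by
    intro y
    constructor
    · exact mem_span_of_premTS_zero L hne y
    · rintro ⟨s, hs⟩
      exact premTS_zero_of_mem_span L hne hpair hregj y s hs
  constructor
  · intro hP j hj
    obtain ⟨s, hs⟩ := (hchar P).1 hP
    rw [hchar]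
    refine ⟨s, ?_⟩
    have h1 := coefv_mem_span (i := m) hmfree hs j
    rwa [coefv_mul_free (degreeOf_pow_free hprodfree s)] at h1
  · intro hj
    rw [hchar]
    have hforall : ∀ j : ℕ, ∃ s, j ≤ P.degreeOf m →
        (L.map ini).prod ^ s * coefv m j P ∈ Ideal.span {x | x ∈ L} := by
      intro j
      by_cases h : j ≤ P.degreeOf m
      · obtain ⟨s, hs⟩ := (hchar (coefv m j P)).1 (hj j h)
        exact ⟨s, fun _ => hs⟩
      · exact ⟨0, fun hc => absurd hc h⟩
    choose f hf using hforall
    set S := (Finset.range (P.degreeOf m + 1)).sup f with hS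
    refine ⟨S, ?_⟩
    have hPsum : (L.map ini).prod ^ S * P
        = ∑ j ∈ Finset.range (P.degreeOf m + 1),
            ((L.map ini).prod ^ S * coefv m j P) * X m ^ j := by
      conv_lhs => rw [← sum_coefv m P]
      rw [Finset.mul_sum]
      apply Finset.sum_congr rfl
      intro j _
      ring
    rw [hPsum]
    apply Ideal.sum_mem
    intro j hjmem
    rw [Finset.mem_range] at hjmem
    have hfj : f j ≤ S := Finset.le_sup (Finset.mem_range.2 hjmem)
    have hmem := hf j (by omega)
    have heq : (L.map ini).prod ^ S * coefv m j P
        = (L.map ini).prod ^ (S - f j) * ((L.map ini).prod ^ (f j) * coefv m j P) := by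
      rw [← mul_assoc, ← pow_add]
      congr 2
      omega
    rw [heq]
    exact Ideal.mul_mem_right _ _ (Ideal.mul_mem_left _ _ hmem)

end CharSets
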